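/- Fix a natural number i and let f : ℕ → ℤ satisfy f(S XOR (3·2^(2i+1))) = −f(S) for every natural number S (where XOR is bitwise exclusive or on natural numbers, so XOR with 3·2^(2i+1) flips exactly the binary digits at positions 2i+1 and 2i+2). Then for every natural number m, Σ_{S=0}^{m·2^(2i+3) − 1} f(S) = 0. -/

import Mathlib

lemma xor_block_add (d a c b : ℕ) (ha : a < 2 ^ d) (hc : c < 2 ^ d) :
    (2 ^ d * b + a) ^^^ c = 2 ^ d * b + (a ^^^ c) := by
  apply Nat.eq_of_testBit_eq
  intro j
  rw [Nat.testBit_xor, Nat.testBit_two_pow_mul_add b ha j,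
    Nat.testBit_two_pow_mul_add b (Nat.xor_lt_two_pow ha hc) j]
  by_cases h : j < d
  · simp [h]
  · simp [h, Nat.testBit_lt_two_pow (lt_of_lt_of_le hc (Nat.pow_le_pow_right (by norm_num) (not_lt.mp h)))]

/-- Cancellation over complete windows: if flipping the binary digits at positions
`2i+1` and `2i+2` negates `f`, then the sum of `f` over any whole number of blocks
of length `2^(2i+3)` vanishes. -/
theorem xor_flip_cancellation
    (i : ℕ) (f : ℕ → ℤ)
    (hf : ∀ S : ℕ, f (S ^^^ (3 * 2 ^ (2 * i + 1))) = -f S) :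
    ∀ m : ℕ, ∑ S ∈ Finset.range (m * 2 ^ (2 * i + 3)), f S = 0 := by
  intro m
  set d := 2 * i + 3 with hd
  set c := 3 * 2 ^ (2 * i + 1) with hcdef
  have hc : c < 2 ^ d := by
    rw [hcdef, hd]
    have hp : 0 < 2 ^ (2 * i + 1) := Nat.pow_pos (by norm_num)
    calc 3 * 2 ^ (2 * i + 1) < 4 * 2 ^ (2 * i + 1) := by omega
    _ = 2 ^ (2 * i + 3) := by ring
  have hmem : ∀ S, S < m * 2 ^ d → S ^^^ c < m * 2 ^ d := by
    intro S hS
    obtain ⟨q, r, hr, rfl⟩ : ∃ q r, r < 2 ^ d ∧ S = 2 ^ d * q + r :=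
      ⟨S / 2 ^ d, S % 2 ^ d, Nat.mod_lt _ (by positivity), (Nat.div_add_mod S (2^d)).symm⟩
    rw [xor_block_add d r c q hr hc]
    have hq : q < m := by
      by_contra h
      push_neg at h
      have : m * 2 ^ d ≤ 2 ^ d * q := by
        rw [mul_comm]
        exact Nat.mul_le_mul_left _ h
      omega
    calc 2 ^ d * q + (r ^^^ c) < 2 ^ d * q + 2 ^ d := by
          exact Nat.add_lt_add_left (Nat.xor_lt_two_pow hr hc) _
    _ = 2 ^ d * (q + 1) := by ring
    _ ≤ 2 ^ d * m := Nat.mul_le_mul_left _ hq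
    _ = m * 2 ^ d := mul_comm _ _
  have key : ∑ S ∈ Finset.range (m * 2 ^ d), f S
      = ∑ S ∈ Finset.range (m * 2 ^ d), f (S ^^^ c) := by
    apply Finset.sum_nbij' (fun S => S ^^^ c) (fun S => S ^^^ c)
    · intro S hS
      simp only [Finset.mem_range] at *
      exact hmem S hS
    · intro S hS
      simp only [Finset.mem_range] at *
      exact hmem S hS
    · intro S _; simp [xor_cancel_right]
    · intro S _; simp [xor_cancel_right]
    · intro S _; simp [xor_cancel_right]
  have : ∑ S ∈ Finset.range (m * 2 ^ d), f S
      = -∑ S ∈ Finset.range (m * 2 ^ d), f S := by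
    nth_rewrite 1 [key]
    rw [← Finset.sum_neg_distrib]
    exact Finset.sum_congr rfl fun S _ => hf S
  omega
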